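/- For all real x > -1, log(1+x) ≤ x - 3x²/(6+4x). -/

import Mathlib

noncomputable def g (x : ℝ) : ℝ := x - 3 * x ^ 2 / (6 + 4 * x) - Real.log (1 + x)

lemma g_deriv (x : ℝ) (hx : -1 < x) :
    HasDerivAt g (4 * x ^ 3 / ((1 + x) * (6 + 4 * x) ^ 2)) x := by
  have h1 : (0:ℝ) < 1 + x := by linarith
  have h2 : (0:ℝ) < 6 + 4 * x := by linarith
  have hd1 : HasDerivAt (fun x : ℝ => 3 * x ^ 2 / (6 + 4 * x))
      ((6 * x * (6 + 4 * x) - 3 * x ^ 2 * 4) / (6 + 4 * x) ^ 2) x := by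
    have ha : HasDerivAt (fun x : ℝ => 3 * x ^ 2) (6 * x) x := by
      have h := (hasDerivAt_pow 2 x).const_mul (3:ℝ)
      exact h.congr_deriv (by push_cast; ring)
    have hb : HasDerivAt (fun x : ℝ => 6 + 4 * x) 4 x := by
      simpa using ((hasDerivAt_id x).const_mul (4:ℝ)).const_add (6:ℝ)
    exact ha.div hb h2.ne'
  have hd2 : HasDerivAt (fun x : ℝ => Real.log (1 + x)) (1 / (1 + x)) x := by
    have hb : HasDerivAt (fun x : ℝ => 1 + x) 1 x := (hasDerivAt_id x).const_add 1
    simpa [one_div, Function.comp_def] using (Real.hasDerivAt_log h1.ne').comp x hb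
  have h := ((hasDerivAt_id x).sub hd1).sub hd2
  exact h.congr_deriv (by rw [eq_comm, eq_sub_iff_add_eq, eq_sub_iff_add_eq, div_add_div _ _ (by positivity) (by positivity), div_add_div _ _ (by positivity) (by positivity), div_eq_one_iff_eq (by positivity)]; ring)

theorem log_one_add_le (x : ℝ) (hx : -1 < x) :
    Real.log (1 + x) ≤ x - 3 * x ^ 2 / (6 + 4 * x) := by
  have key : 0 ≤ g x := by
    rcases le_or_gt 0 x with h | h
    · have hmono : MonotoneOn g (Set.Ici 0) := by
        apply monotoneOn_of_deriv_nonneg (convex_Ici 0)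
        · intro y hy
          have hy' : (0:ℝ) ≤ y := hy
          exact (g_deriv y (by linarith)).continuousAt.continuousWithinAt
        · intro y hy
          rw [interior_Ici] at hy
          have hy' : (0:ℝ) < y := hy
          exact (g_deriv y (by linarith)).differentiableAt.differentiableWithinAt
        · intro y hy
          rw [interior_Ici] at hy
          have hy' : (0:ℝ) < y := hy
          rw [(g_deriv y (by linarith)).deriv]
          positivity
      have h0 := hmono Set.self_mem_Ici (Set.mem_Ici.mpr h) h
      have : g 0 = 0 := by simp [g]
      linarith
    · have hanti : AntitoneOn g (Set.Icc x 0) := by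
        apply antitoneOn_of_deriv_nonpos (convex_Icc x 0)
        · intro y hy
          have hy1 : x ≤ y := hy.1
          exact (g_deriv y (by linarith)).continuousAt.continuousWithinAt
        · intro y hy
          rw [interior_Icc] at hy
          have hy1 : x < y := hy.1
          exact (g_deriv y (by linarith)).differentiableAt.differentiableWithinAt
        · intro y hy
          rw [interior_Icc] at hy
          have hy1 : x < y := hy.1
          have hy2 : y < 0 := hy.2
          have hym : -1 < y := by linarith
          rw [(g_deriv y hym).deriv]
          apply div_nonpos_of_nonpos_of_nonneg
          · nlinarith [sq_nonneg y]
          · have h1 : (0:ℝ) < 1 + y := by linarith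
            positivity
      have h0 := hanti (Set.left_mem_Icc.mpr h.le) (Set.right_mem_Icc.mpr h.le) h.le
      have : g 0 = 0 := by simp [g]
      linarith
  have hg : g x = x - 3 * x ^ 2 / (6 + 4 * x) - Real.log (1 + x) := rfl
  linarith [key, hg ▸ key]
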